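/- arXiv:2201.10989 — 7 statements merged into one kernel-verified Lean document; each statement's English description precedes it below -/
import Mathlib

section
/- Sample monotonicity: if (w_1, ..., w_{K+1}) are exchangeable positive integrable random variables, then E[log((w_1 + ... + w_K)/K)] ≤ E[log((w_1 + ... + w_{K+1})/(K+1))], assuming both expectations exist. -/
open MeasureTheory

/-- sample monotonicity for exchangeable positive integrable weights. -/
theorem sample_monotonicity {Ω : Type*} [MeasurableSpace Ω] (P : Measure Ω)
    [IsProbabilityMeasure P] (K : ℕ) (hK : 0 < K) (w : Fin (K + 1) → Ω → ℝ)
    (hexch : ∀ σ : Equiv.Perm (Fin (K + 1)),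
      Measure.map (fun ω => fun i => w (σ i) ω) P
        = Measure.map (fun ω => fun i => w i ω) P)
    (hpos : ∀ i, ∀ᵐ ω ∂P, 0 < w i ω)
    (hint : ∀ i, Integrable (w i) P)
    (hlogK : Integrable
      (fun ω => Real.log ((∑ i : Fin K, w i.castSucc ω) / K)) P)
    (hlogK1 : Integrable
      (fun ω => Real.log ((∑ i : Fin (K + 1), w i ω) / (K + 1))) P) :
    ∫ ω, Real.log ((∑ i : Fin K, w i.castSucc ω) / K) ∂P
      ≤ ∫ ω, Real.log ((∑ i : Fin (K + 1), w i ω) / (K + 1)) ∂P := by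
  classical
  set S : Ω → ℝ := fun ω => ∑ i : Fin (K + 1), w i ω with hS
  set g : (Fin (K + 1) → ℝ) → ℝ :=
    fun v => Real.log ((∑ i, v i - v (Fin.last K)) / K) with hg
  have hKR : (0 : ℝ) < K := by exact_mod_cast hK
  have hgmeas : Measurable g := by
    apply Real.measurable_log.comp
    exact ((Finset.univ.measurable_sum fun i _ => measurable_pi_apply i).sub
      (measurable_pi_apply _)).div_const _
  have haepi : ∀ u : Fin (K + 1) → Ω → ℝ, (∀ i, AEMeasurable (u i) P) →
      AEMeasurable (fun ω => fun i => u i ω) P := by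
    intro u h
    refine ⟨fun ω i => (h i).mk _ ω,
      measurable_pi_lambda _ fun i => (h i).measurable_mk, ?_⟩
    filter_upwards [ae_all_iff.2 fun i => (h i).ae_eq_mk] with ω hω
    funext i; exact hω i
  have hwae : AEMeasurable (fun ω => fun i => w i ω) P :=
    haepi _ fun i => (hint i).aemeasurable
  -- the K-average integrand is g ∘ w
  have hgw : (fun ω => g (fun i => w i ω))
      = fun ω => Real.log ((∑ i : Fin K, w i.castSucc ω) / K) := by
    funext ω
    simp only [hg]
    rw [Fin.sum_univ_castSucc]
    ring_nf
  -- g composed with the swapped weights gives the leave-one-out average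
  have hswap : ∀ j : Fin (K + 1),
      (fun ω => g (fun i => w (Equiv.swap j (Fin.last K) i) ω))
        = fun ω => Real.log ((S ω - w j ω) / K) := by
    intro j
    funext ω
    simp only [hg]
    rw [Equiv.sum_comp (Equiv.swap j (Fin.last K)) (fun i => w i ω),
      Equiv.swap_apply_right]
  have hσae : ∀ j : Fin (K + 1),
      AEMeasurable (fun ω => fun i => w (Equiv.swap j (Fin.last K) i) ω) P :=
    fun j => haepi _ fun i => (hint _).aemeasurable
  -- equality of integrals via exchangeability
  have key : ∀ j : Fin (K + 1),
      ∫ ω, Real.log ((S ω - w j ω) / K) ∂P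
        = ∫ ω, Real.log ((∑ i : Fin K, w i.castSucc ω) / K) ∂P := by
    intro j
    rw [← hgw, ← hswap j]
    calc ∫ ω, g (fun i => w (Equiv.swap j (Fin.last K) i) ω) ∂P
        = ∫ v, g v ∂(Measure.map
            (fun ω => fun i => w (Equiv.swap j (Fin.last K) i) ω) P) :=
          (integral_map (hσae j) hgmeas.aestronglyMeasurable).symm
      _ = ∫ v, g v ∂(Measure.map (fun ω => fun i => w i ω) P) := by
          rw [hexch (Equiv.swap j (Fin.last K))]
      _ = ∫ ω, g (fun i => w i ω) ∂P :=
          integral_map hwae hgmeas.aestronglyMeasurable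
  -- integrability of each leave-one-out log average
  have hintj : ∀ j : Fin (K + 1),
      Integrable (fun ω => Real.log ((S ω - w j ω) / K)) P := by
    intro j
    rw [← hswap j]
    have h1 : Integrable g (Measure.map
        (fun ω => fun i => w (Equiv.swap j (Fin.last K) i) ω) P) := by
      rw [hexch (Equiv.swap j (Fin.last K))]
      rw [integrable_map_measure hgmeas.aestronglyMeasurable hwae]
      show Integrable (fun ω => g (fun i => w i ω)) P
      rw [hgw]; exact hlogK
    exact (integrable_map_measure hgmeas.aestronglyMeasurable (hσae j)).mp h1
  -- pointwise Jensen
  have hpos' : ∀ᵐ ω ∂P, ∀ i, 0 < w i ω := ae_all_iff.2 hpos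
  have jensen : ∀ᵐ ω ∂P,
      ∑ j : Fin (K + 1), (1 / (K + 1 : ℝ)) * Real.log ((S ω - w j ω) / K)
        ≤ Real.log (S ω / (K + 1)) := by
    filter_upwards [hpos'] with ω hω
    have hmem : ∀ j : Fin (K + 1), (S ω - w j ω) / K ∈ Set.Ioi (0 : ℝ) := by
      intro j
      have : S ω - w j ω = ∑ i ∈ Finset.univ.erase j, w i ω := by
        rw [Finset.sum_erase_eq_sub (Finset.mem_univ j)]
      have hpos2 : 0 < S ω - w j ω := by
        rw [this]
        apply Finset.sum_pos (fun i _ => hω i)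
        rw [← Finset.card_pos, Finset.card_erase_of_mem (Finset.mem_univ j),
          Finset.card_univ, Fintype.card_fin]
        omega
      exact div_pos hpos2 hKR
    have h := (strictConcaveOn_log_Ioi.concaveOn).le_map_sum
      (t := Finset.univ) (w := fun _ : Fin (K + 1) => (1 / (K + 1 : ℝ)))
      (p := fun j => (S ω - w j ω) / K)
      (fun i _ => by positivity)
      (by
        rw [Finset.sum_const, Finset.card_univ, Fintype.card_fin, nsmul_eq_mul]
        push_cast
        field_simp)
      (fun j _ => hmem j)
    have hsum : ∑ j : Fin (K + 1), (1 / (K + 1 : ℝ)) * ((S ω - w j ω) / K)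
        = S ω / (K + 1) := by
      rw [← Finset.mul_sum, ← Finset.sum_div, Finset.sum_sub_distrib,
        Finset.sum_const, Finset.card_univ, Fintype.card_fin, nsmul_eq_mul]
      field_simp
      simp only [hS]; push_cast; ring
    simpa only [smul_eq_mul, hsum] using h
  -- assemble
  have hintsum : Integrable
      (fun ω => ∑ j : Fin (K + 1),
        (1 / (K + 1 : ℝ)) * Real.log ((S ω - w j ω) / K)) P :=
    integrable_finset_sum _ fun j _ => ((hintj j).const_mul _)
  have hle : ∫ ω, ∑ j : Fin (K + 1),
        (1 / (K + 1 : ℝ)) * Real.log ((S ω - w j ω) / K) ∂P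
      ≤ ∫ ω, Real.log ((∑ i : Fin (K + 1), w i ω) / (K + 1)) ∂P :=
    integral_mono_ae hintsum hlogK1 jensen
  have heq : ∫ ω, ∑ j : Fin (K + 1),
        (1 / (K + 1 : ℝ)) * Real.log ((S ω - w j ω) / K) ∂P
      = ∫ ω, Real.log ((∑ i : Fin K, w i.castSucc ω) / K) ∂P := by
    rw [integral_finset_sum _ fun j _ => ((hintj j).const_mul _)]
    have : ∀ j : Fin (K + 1),
        ∫ ω, (1 / (K + 1 : ℝ)) * Real.log ((S ω - w j ω) / K) ∂P
          = (1 / (K + 1 : ℝ)) *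
            ∫ ω, Real.log ((∑ i : Fin K, w i.castSucc ω) / K) ∂P := by
      intro j
      rw [integral_const_mul, key j]
    rw [Finset.sum_congr rfl fun j _ => this j, Finset.sum_const,
      Finset.card_univ, Fintype.card_fin, nsmul_eq_mul]
    field_simp
    rw [Nat.cast_add_one]
  rw [← heq]
  exact hle
end

section
/- Let x, y be i.i.d. positive integrable random variables and set w_1 = x, w_2 = y, w_3 = x. Then E[log((w_1+w_2)/2)] ≥ E[log((w_1+w_2+w_3)/3)], assuming both expectations exist. (Hence identically distributed weights do not suffice for sample monotonicity.) -/
open MeasureTheory ProbabilityTheory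

/-- Pointwise key inequality. -/
lemma key_ineq {a b : ℝ} (ha : 0 < a) (hb : 0 < b) :
    Real.log ((a + b + a) / 3) + Real.log ((b + a + b) / 3)
      ≤ 2 * Real.log ((a + b) / 2) := by
  have h1 : (0:ℝ) < (a + b + a) / 3 := by linarith
  have h2 : (0:ℝ) < (b + a + b) / 3 := by linarith
  have h3 : (0:ℝ) < (a + b) / 2 := by linarith
  rw [← Real.log_mul (ne_of_gt h1) (ne_of_gt h2)]
  have : 2 * Real.log ((a + b) / 2) = Real.log (((a + b) / 2) ^ 2) := by
    rw [Real.log_pow]; ring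
  rw [this]
  apply Real.log_le_log (by positivity)
  nlinarith [sq_nonneg (a - b)]

/-- with i.i.d. `x, y` and weights `w₁ = x, w₂ = y, w₃ = x`
(identically distributed but not exchangeable), the 2-sample MCO dominates
the 3-sample one. -/
theorem id_not_enough {Ω : Type*} [MeasurableSpace Ω] (P : Measure Ω)
    [IsProbabilityMeasure P] (x y : Ω → ℝ)
    (hindep : IndepFun x y P)
    (hid : Measure.map x P = Measure.map y P)
    (hxpos : ∀ᵐ ω ∂P, 0 < x ω) (hypos : ∀ᵐ ω ∂P, 0 < y ω)
    (hxint : Integrable x P) (hyint : Integrable y P)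
    (hlog2 : Integrable (fun ω => Real.log ((x ω + y ω) / 2)) P)
    (hlog3 : Integrable (fun ω => Real.log ((x ω + y ω + x ω) / 3)) P) :
    ∫ ω, Real.log ((x ω + y ω + x ω) / 3) ∂P
      ≤ ∫ ω, Real.log ((x ω + y ω) / 2) ∂P := by
  have hx : AEMeasurable x P := hxint.aemeasurable
  have hy : AEMeasurable y P := hyint.aemeasurable
  set μ := P.map x with hμ
  have hprob : IsProbabilityMeasure μ := Measure.isProbabilityMeasure_map hx
  have hpair : AEMeasurable (fun ω => (x ω, y ω)) P := hx.prodMk hy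
  have hmap : P.map (fun ω => (x ω, y ω)) = μ.prod μ := by
    rw [(indepFun_iff_map_prod_eq_prod_map_map hx hy).mp hindep, ← hid]
  set ν := μ.prod μ with hν
  set g1 : ℝ × ℝ → ℝ := fun p => Real.log ((p.1 + p.2 + p.1) / 3) with hg1
  set g2 : ℝ × ℝ → ℝ := fun p => Real.log ((p.2 + p.1 + p.2) / 3) with hg2
  set h : ℝ × ℝ → ℝ := fun p => Real.log ((p.1 + p.2) / 2) with hh
  have hg1m : Measurable g1 := by
    apply Real.measurable_log.comp; fun_prop
  have hhm : Measurable h := by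
    apply Real.measurable_log.comp; fun_prop
  have hg2m : Measurable g2 := by
    apply Real.measurable_log.comp; fun_prop
  -- transfer integrals
  have hI3 : ∫ ω, Real.log ((x ω + y ω + x ω) / 3) ∂P = ∫ p, g1 p ∂ν := by
    rw [← hmap, integral_map hpair hg1m.aestronglyMeasurable]
  have hI2 : ∫ ω, Real.log ((x ω + y ω) / 2) ∂P = ∫ p, h p ∂ν := by
    rw [← hmap, integral_map hpair hhm.aestronglyMeasurable]
  -- transfer integrability
  have hg1int : Integrable g1 ν := by
    rw [← hmap]
    exact (integrable_map_measure hg1m.aestronglyMeasurable hpair).mpr hlog3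
  have hhint : Integrable h ν := by
    rw [← hmap]
    exact (integrable_map_measure hhm.aestronglyMeasurable hpair).mpr hlog2
  have hswap : g2 = g1 ∘ Prod.swap := rfl
  have hg2int : Integrable g2 ν := by
    rw [hswap, hν]; exact hg1int.swap
  have hI12 : ∫ p, g2 p ∂ν = ∫ p, g1 p ∂ν := by
    rw [hswap, hν]
    exact integral_prod_swap g1
  -- a.e. positivity
  have hposμ : ∀ᵐ a ∂μ, 0 < a := by
    rw [hμ, ae_map_iff hx measurableSet_Ioi]
    exact hxpos
  have hpos : ∀ᵐ p ∂ν, 0 < p.1 ∧ 0 < p.2 := by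
    rw [hν, Measure.ae_prod_iff_ae_ae]
    · filter_upwards [hposμ] with a ha
      filter_upwards [hposμ] with b hb
      exact ⟨ha, hb⟩
    · exact (measurableSet_Ioi.preimage measurable_fst).inter
        (measurableSet_Ioi.preimage measurable_snd)
  -- conclude
  rw [hI3, hI2]
  have havg : ∫ p, g1 p ∂ν = ∫ p, (g1 p + g2 p) / 2 ∂ν := by
    rw [integral_div, integral_add hg1int hg2int, hI12]
    ring
  rw [havg]
  apply integral_mono_ae ((hg1int.add hg2int).div_const 2) hhint
  filter_upwards [hpos] with p hp
  have := key_ineq hp.1 hp.2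
  simp only [hg1, hg2, hh, Pi.add_apply]
  linarith
end

section
/- If R ~ Gamma(α, β) and R' ~ Gamma(a, b) with α,β,a,b > 0 and equal means (α/β = a/b), then E[log R] > E[log R'] if and only if β > b. -/
open MeasureTheory ProbabilityTheory Real Set
open scoped ENNReal NNReal

namespace GammaLogAux

lemma gammaMeasure_eq (α β : ℝ) :
    gammaMeasure α β
      = volume.withDensity (fun x => ((Real.toNNReal (gammaPDFReal α β x)) : ℝ≥0∞)) := rfl

lemma pdf_zero_of_neg {α β x : ℝ} (hx : x < 0) : gammaPDFReal α β x = 0 := by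
  simp [gammaPDFReal, if_neg (not_le.mpr hx)]

lemma integral_gammaMeasure {α β : ℝ} (hα : 0 < α) (hβ : 0 < β) (g : ℝ → ℝ) :
    ∫ x, g x ∂(gammaMeasure α β)
      = ∫ x in Ioi 0, g x * gammaPDFReal α β x := by
  rw [gammaMeasure_eq, integral_withDensity_eq_integral_smul
    (measurable_gammaPDFReal α β).real_toNNReal g]
  rw [← integral_Ici_eq_integral_Ioi,
    ← setIntegral_eq_integral_of_forall_compl_eq_zero (s := Ici 0) (fun x hx => ?_)]
  · refine setIntegral_congr_fun measurableSet_Ici (fun x hx => ?_)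
    rw [NNReal.smul_def, smul_eq_mul, Real.coe_toNNReal _ (gammaPDFReal_nonneg hα hβ x),
      mul_comm]
  · rw [pdf_zero_of_neg (by simpa using hx : x < (0:ℝ))]
    simp

lemma integrable_gammaMeasure_iff {α β : ℝ} (hα : 0 < α) (hβ : 0 < β) {g : ℝ → ℝ} :
    Integrable g (gammaMeasure α β)
      ↔ IntegrableOn (fun x => g x * gammaPDFReal α β x) (Ioi 0) := by
  rw [gammaMeasure_eq, integrable_withDensity_iff
    (measurable_gammaPDFReal α β).real_toNNReal.coe_nnreal_ennreal
    (ae_of_all _ fun x => ENNReal.coe_lt_top)]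
  constructor
  · intro h
    exact (h.restrict (s := Ioi 0)).congr (ae_of_all _ fun x => by
      simp [Real.coe_toNNReal _ (gammaPDFReal_nonneg hα hβ x)])
  · intro h
    have : Integrable (fun x => g x * gammaPDFReal α β x) := by
      rw [← integrableOn_univ, ← Set.Iio_union_Ici (a := (0:ℝ))]
      refine IntegrableOn.union ?_ ?_
      · refine (integrableOn_congr_fun (fun x hx => ?_) measurableSet_Iio).mpr
          (integrableOn_zero)
        rw [pdf_zero_of_neg (by simpa using hx : x < (0:ℝ))]; simp
      · rw [integrableOn_Ici_iff_integrableOn_Ioi]; exact h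
    exact this.congr (ae_of_all _ fun x => by
      simp [Real.coe_toNNReal _ (gammaPDFReal_nonneg hα hβ x)])

lemma integrableOn_rpow_exp {s β : ℝ} (hs : -1 < s) (hβ : 0 < β) :
    IntegrableOn (fun x : ℝ => x ^ s * Real.exp (-(β * x))) (Ioi 0) := by
  have := integrableOn_rpow_mul_exp_neg_mul_rpow hs zero_lt_one hβ
  simpa [Real.rpow_one, neg_mul] using this

lemma pdf_eq_of_pos {α β x : ℝ} (hx : 0 < x) :
    gammaPDFReal α β x = β ^ α / Gamma α * x ^ (α - 1) * exp (-(β * x)) := by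
  simp [gammaPDFReal, if_pos hx.le]


lemma integrable_id_gamma {α β : ℝ} (hα : 0 < α) (hβ : 0 < β) :
    Integrable (fun x : ℝ => x) (gammaMeasure α β) := by
  rw [integrable_gammaMeasure_iff hα hβ]
  have h : IntegrableOn (fun x : ℝ => β ^ α / Gamma α * (x ^ α * exp (-(β * x)))) (Ioi 0) :=
    (integrableOn_rpow_exp (by linarith) hβ).const_mul _
  refine h.congr_fun (fun x hx => ?_) measurableSet_Ioi
  have hx : (0:ℝ) < x := hx
  rw [pdf_eq_of_pos hx]
  dsimp only
  rw [show x ^ α = x ^ (α - 1) * x by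
    rw [← Real.rpow_add_one hx.ne']; ring_nf]
  ring

lemma integral_id_gamma {α β : ℝ} (hα : 0 < α) (hβ : 0 < β) :
    ∫ x, x ∂(gammaMeasure α β) = α / β := by
  rw [integral_gammaMeasure hα hβ]
  rw [setIntegral_congr_fun measurableSet_Ioi
    (g := fun x => β ^ α / Gamma α * (x ^ ((α + 1) - 1) * exp (-(β * x))))
    (fun x hx => ?_)]
  · rw [integral_const_mul, integral_rpow_mul_exp_neg_mul_Ioi (by linarith) hβ,
      Real.Gamma_add_one hα.ne']
    rw [Real.div_rpow zero_le_one hβ.le, Real.one_rpow]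
    have hΓ : Gamma α ≠ 0 := (Real.Gamma_pos_of_pos hα).ne'
    have hβ1 : β ^ (α + 1) ≠ 0 := (Real.rpow_pos_of_pos hβ _).ne'
    field_simp
    rw [Real.rpow_add_one hβ.ne']
  · have hx : (0:ℝ) < x := hx
    show x * gammaPDFReal α β x = β ^ α / Gamma α * (x ^ (α + 1 - 1) * exp (-(β * x)))
    rw [pdf_eq_of_pos hx]
    rw [show x ^ (α + 1 - 1) = x ^ (α - 1) * x by
      rw [← Real.rpow_add_one hx.ne']; ring_nf]
    ring


lemma integrableOn_pdf {a b : ℝ} (ha : 0 < a) (hb : 0 < b) :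
    IntegrableOn (gammaPDFReal a b) (Ioi 0) := by
  have h : IntegrableOn (fun x : ℝ => b ^ a / Gamma a * (x ^ (a - 1) * exp (-(b * x)))) (Ioi 0) :=
    (integrableOn_rpow_exp (by linarith) hb).const_mul _
  refine h.congr_fun (fun x hx => ?_) measurableSet_Ioi
  rw [pdf_eq_of_pos (hx : (0:ℝ) < x)]; ring

lemma integral_pdf {a b : ℝ} (ha : 0 < a) (hb : 0 < b) :
    ∫ x in Ioi 0, gammaPDFReal a b x = 1 := by
  haveI := isProbabilityMeasure_gammaMeasure ha hb
  have := integral_gammaMeasure ha hb (fun _ => (1:ℝ))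
  simp only [one_mul] at this
  rw [← this, integral_const]
  simp

lemma pdf_exp_form {α β x : ℝ} (hα : 0 < α) (hβ : 0 < β) (hx : 0 < x) :
    gammaPDFReal α β x
      = exp (Real.log (β ^ α / Gamma α) + (α - 1) * Real.log x - β * x) := by
  have hC : (0:ℝ) < β ^ α / Gamma α := by positivity
  rw [pdf_eq_of_pos hx,
    show Real.log (β ^ α / Gamma α) + (α - 1) * Real.log x - β * x
      = Real.log (β ^ α / Gamma α) + ((α - 1) * Real.log x + -(β * x)) by ring,
    Real.exp_add, Real.exp_add, Real.exp_log hC, mul_comm (α - 1), ← Real.rpow_def_of_pos hx,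
    ← mul_assoc]

lemma ratio_eq {α β a b x : ℝ} (hα : 0 < α) (hβ : 0 < β) (ha : 0 < a) (hb : 0 < b)
    (hx : 0 < x) :
    Real.exp (Real.log (b ^ a * Gamma α / (Gamma a * β ^ α))
        + (a - α) * Real.log x - (b - β) * x) * gammaPDFReal α β x
      = gammaPDFReal a b x := by
  have hC1 : (0:ℝ) < β ^ α / Gamma α := by positivity
  have hC2 : (0:ℝ) < b ^ a / Gamma a := by positivity
  have hK : b ^ a * Gamma α / (Gamma a * β ^ α) = (b ^ a / Gamma a) / (β ^ α / Gamma α) := by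
    field_simp
  rw [pdf_exp_form hα hβ hx, pdf_exp_form ha hb hx, ← Real.exp_add, Real.exp_eq_exp, hK,
    Real.log_div hC2.ne' hC1.ne']
  ring

lemma finite_level_set {r t : ℝ} (hr : 0 < r) :
    Set.Finite {x : ℝ | x ∈ Ioi 0 ∧ Real.log x - r * x = t} := by
  set ℓ : ℝ → ℝ := fun x => Real.log x - r * x with hℓ
  have hderiv : ∀ x : ℝ, 0 < x → HasDerivAt ℓ (x⁻¹ - r) x := fun x hx =>
    (Real.hasDerivAt_log hx.ne').sub (by simpa using (hasDerivAt_id x).const_mul r)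
  have hrinv : (0:ℝ) < r⁻¹ := inv_pos.mpr hr
  have hcont : ContinuousOn ℓ (Ioi 0) := fun x hx =>
    (hderiv x hx).continuousAt.continuousWithinAt
  have h1 : StrictMonoOn ℓ (Ioc 0 r⁻¹) := by
    apply strictMonoOn_of_deriv_pos (convex_Ioc _ _)
      (hcont.mono (fun x hx => hx.1))
    intro x hx
    rw [interior_Ioc] at hx
    rw [(hderiv x hx.1).deriv, sub_pos]
    have h2 := hx.2
    have h1 := hx.1
    nlinarith [mul_inv_cancel₀ h1.ne', mul_inv_cancel₀ hr.ne']
  have h2 : StrictAntiOn ℓ (Ici r⁻¹) := by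
    apply strictAntiOn_of_deriv_neg (convex_Ici _)
      (hcont.mono (fun x hx => lt_of_lt_of_le hrinv hx))
    intro x hx
    rw [interior_Ici] at hx
    have hx' : r⁻¹ < x := hx
    have hxpos : 0 < x := lt_trans hrinv hx'
    rw [(hderiv x hxpos).deriv, sub_neg]
    nlinarith [mul_inv_cancel₀ hxpos.ne', mul_inv_cancel₀ hr.ne', mul_pos hxpos hr]
  have hsub : {x : ℝ | x ∈ Ioi 0 ∧ ℓ x = t}
      ⊆ (Ioc 0 r⁻¹ ∩ ℓ ⁻¹' {t}) ∪ (Ici r⁻¹ ∩ ℓ ⁻¹' {t}) := by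
    rintro x ⟨hx, hxt⟩
    rcases le_total x r⁻¹ with h | h
    · exact Or.inl ⟨⟨hx, h⟩, hxt⟩
    · exact Or.inr ⟨h, hxt⟩
  refine Set.Finite.subset (Set.Finite.union ?_ ?_) hsub
  · exact Set.Subsingleton.finite
      (fun x hx y hy => h1.injOn hx.1 hy.1 (hx.2.trans hy.2.symm))
  · exact Set.Subsingleton.finite
      (fun x hx y hy => h2.injOn hx.1 hy.1 (hx.2.trans hy.2.symm))

lemma gibbs_lt {α β a b : ℝ} (hα : 0 < α) (hβ : 0 < β) (ha : 0 < a) (hb : 0 < b)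
    (hmean : α / β = a / b) (hne : α ≠ a)
    (hlog : Integrable Real.log (gammaMeasure α β)) :
    Real.log (b ^ a * Gamma α / (Gamma a * β ^ α))
      + (a - α) * (∫ x, Real.log x ∂gammaMeasure α β) - (b - β) * (α / β) < 0 := by
  haveI := isProbabilityMeasure_gammaMeasure hα hβ
  set μ := gammaMeasure α β with hμ
  set c : ℝ := Real.log (b ^ a * Gamma α / (Gamma a * β ^ α)) with hc
  set p : ℝ := a - α with hp
  set q : ℝ := b - β with hqdef
  set φ : ℝ → ℝ := fun x => c + p * Real.log x - q * x with hφ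
  set h : ℝ → ℝ := fun x => Real.exp (φ x) with hh
  have hp0 : p ≠ 0 := sub_ne_zero.mpr (Ne.symm hne)
  -- integrability of φ
  have hφint : Integrable φ μ := by
    exact (((integrable_const c).add (hlog.const_mul p)).sub
      ((integrable_id_gamma hα hβ).const_mul q))
  -- integrability of h
  have hhint : Integrable h μ := by
    rw [hμ, integrable_gammaMeasure_iff hα hβ]
    exact (integrableOn_pdf ha hb).congr_fun
      (fun x hx => (ratio_eq hα hβ ha hb hx).symm) measurableSet_Ioi
  -- integral of h
  have hhval : ∫ x, h x ∂μ = 1 := by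
    rw [hμ, integral_gammaMeasure hα hβ,
      setIntegral_congr_fun measurableSet_Ioi
        (g := gammaPDFReal a b) (fun x hx => ratio_eq hα hβ ha hb hx),
      integral_pdf ha hb]
  -- pointwise inequality
  have hle : ∀ x, φ x ≤ h x - 1 := fun x => by
    have := Real.add_one_le_exp (φ x); simp only [hh]; linarith
  -- value of ∫ φ
  have hφval : ∫ x, φ x ∂μ = c + p * (∫ x, Real.log x ∂μ) - q * (α / β) := by
    have h1 : ∫ x, (c + p * Real.log x - q * x) ∂μ
        = (∫ x, (c + p * Real.log x) ∂μ) - ∫ x, q * x ∂μ :=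
      integral_sub ((integrable_const c).add (hlog.const_mul p))
        ((integrable_id_gamma hα hβ).const_mul q)
    have h2 : ∫ x, (c + p * Real.log x) ∂μ = (∫ _x, (c:ℝ) ∂μ) + ∫ x, p * Real.log x ∂μ :=
      integral_add (integrable_const c) (hlog.const_mul p)
    have h3 : ∫ x, q * x ∂μ = q * ∫ x, x ∂μ := integral_const_mul q _
    have h4 : ∫ x, p * Real.log x ∂μ = p * ∫ x, Real.log x ∂μ := integral_const_mul p _
    rw [show (∫ x, φ x ∂μ) = ∫ x, (c + p * Real.log x - q * x) ∂μ from rfl, h1, h2, h3, h4,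
      integral_const, integral_id_gamma hα hβ]
    simp
  rw [← hφval]
  -- nonstrict inequality
  have hsubint : Integrable (fun x => h x - 1) μ := hhint.sub (integrable_const 1)
  have hsubval : ∫ x, (h x - 1) ∂μ = 0 := by
    rw [integral_sub hhint (integrable_const 1), hhval, integral_const]; simp
  have hnonstrict : ∫ x, φ x ∂μ ≤ 0 := by
    rw [← hsubval]
    exact integral_mono hφint hsubint hle
  rcases lt_or_eq_of_le hnonstrict with hlt | heq
  · exact hlt
  exfalso
  -- equality case: a.e. φ = 0
  have huint : Integrable (fun x => (h x - 1) - φ x) μ := hsubint.sub hφint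
  have huval : ∫ x, ((h x - 1) - φ x) ∂μ = 0 := by
    rw [integral_sub hsubint hφint, hsubval, heq]; simp
  have hu0 : (fun x => (h x - 1) - φ x) =ᵐ[μ] 0 :=
    (integral_eq_zero_iff_of_nonneg (fun x => by have := hle x; simp; linarith) huint).mp huval
  have haeφ : ∀ᵐ x ∂μ, φ x = 0 := by
    filter_upwards [hu0] with x hx
    simp only [Pi.zero_apply] at hx
    by_contra hφx
    have := Real.add_one_lt_exp hφx
    simp only [hh] at hx
    linarith
  -- transfer to volume
  rw [hμ, gammaMeasure_eq, ae_withDensity_iff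
    (measurable_gammaPDFReal α β).real_toNNReal.coe_nnreal_ennreal] at haeφ
  have hvol : ∀ᵐ x ∂(volume : Measure ℝ), x ∈ Ioi 0 → φ x = 0 := by
    filter_upwards [haeφ] with x hx hx0
    refine hx ?_
    exact_mod_cast (Real.toNNReal_pos.mpr (gammaPDFReal_pos hα hβ hx0)).ne'
  rw [Filter.eventually_iff, mem_ae_iff] at hvol
  have hBset : {x : ℝ | x ∈ Ioi 0 → φ x = 0}ᶜ = {x : ℝ | x ∈ Ioi 0 ∧ ¬ φ x = 0} := by
    ext x; simp [Classical.not_imp]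
  rw [hBset] at hvol
  -- the zero set is finite
  have hq : b - β = (a - α) * (β / α) := by
    have := (div_eq_div_iff hβ.ne' hb.ne').mp hmean
    field_simp
    linarith
  have hSsub : {x : ℝ | x ∈ Ioi 0 ∧ φ x = 0}
      ⊆ {x : ℝ | x ∈ Ioi 0 ∧ Real.log x - (β / α) * x = -(c / p)} := by
    rintro x ⟨hx, hx0⟩
    refine ⟨hx, ?_⟩
    simp only [hφ, hp, hqdef] at hx0 ⊢
    rw [hq] at hx0
    field_simp
    have hpa : a - α ≠ 0 := hp0
    field_simp at hx0
    nlinarith [hx0]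
  have hSfin : (volume : Measure ℝ) {x : ℝ | x ∈ Ioi 0 ∧ φ x = 0} = 0 :=
    measure_mono_null hSsub (Set.Finite.measure_zero
      (finite_level_set (div_pos hβ hα)) _)
  have hcover : Ioi (0:ℝ) ⊆ {x : ℝ | x ∈ Ioi 0 ∧ φ x = 0}
      ∪ {x : ℝ | x ∈ Ioi 0 ∧ ¬ φ x = 0} := by
    intro x hx
    by_cases hφx : φ x = 0
    · exact Or.inl ⟨hx, hφx⟩
    · exact Or.inr ⟨hx, hφx⟩
  have : (volume : Measure ℝ) (Ioi 0) = 0 := by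
    refine le_antisymm ?_ zero_le'
    calc (volume : Measure ℝ) (Ioi 0) ≤ _ := measure_mono hcover
    _ ≤ _ + _ := measure_union_le _ _
    _ = 0 := by rw [hSfin, hvol, add_zero]
  rw [Real.volume_Ioi] at this
  exact ENNReal.top_ne_zero this

lemma lt_of_shape_lt {α β a b : ℝ} (hα : 0 < α) (hβ : 0 < β) (ha : 0 < a) (hb : 0 < b)
    (hmean : α / β = a / b) (hlt : a < α)
    (hlogμ : Integrable Real.log (gammaMeasure α β))
    (hlogν : Integrable Real.log (gammaMeasure a b)) :
    (∫ x, Real.log x ∂gammaMeasure a b) < ∫ x, Real.log x ∂gammaMeasure α β := by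
  have G1 := gibbs_lt hα hβ ha hb hmean hlt.ne' hlogμ
  have G2 := gibbs_lt ha hb hα hβ hmean.symm hlt.ne hlogν
  rw [hmean.symm] at G2
  have hKK : Real.log (b ^ a * Gamma α / (Gamma a * β ^ α))
      + Real.log (β ^ α * Gamma a / (Gamma α * b ^ a)) = 0 := by
    have h1 : (0:ℝ) < b ^ a * Gamma α / (Gamma a * β ^ α) := by positivity
    have h2 : (0:ℝ) < β ^ α * Gamma a / (Gamma α * b ^ a) := by positivity
    rw [← Real.log_mul h1.ne' h2.ne',
      show b ^ a * Gamma α / (Gamma a * β ^ α) * (β ^ α * Gamma a / (Gamma α * b ^ a)) = 1 by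
        have e1 := (Real.rpow_pos_of_pos hb a).ne'
        have e2 := (Real.rpow_pos_of_pos hβ α).ne'
        have e3 := (Real.Gamma_pos_of_pos hα).ne'
        have e4 := (Real.Gamma_pos_of_pos ha).ne'
        field_simp]
    exact Real.log_one
  nlinarith [G1, G2, hKK, hlt]

end GammaLogAux

open GammaLogAux in
/-- for Gamma variables with equal means,
`E[log R] > E[log R'] ↔ β > b`. -/
theorem gamma_log_mean_iff {Ω : Type*} [MeasurableSpace Ω] (P : Measure Ω)
    [IsProbabilityMeasure P] (R R' : Ω → ℝ) (α β a b : ℝ)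
    (hα : 0 < α) (hβ : 0 < β) (ha : 0 < a) (hb : 0 < b)
    (hR : Measure.map R P = gammaMeasure α β)
    (hR' : Measure.map R' P = gammaMeasure a b)
    (hmean : α / β = a / b)
    (hlogR : Integrable (fun ω => Real.log (R ω)) P)
    (hlogR' : Integrable (fun ω => Real.log (R' ω)) P) :
    (∫ ω, Real.log (R' ω) ∂P) < ∫ ω, Real.log (R ω) ∂P ↔ b < β := by
  have hRm : AEMeasurable R P := by
    by_contra hc
    rw [Measure.map_of_not_aemeasurable hc] at hR
    have h1 := (isProbabilityMeasure_gammaMeasure hα hβ).measure_univ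
    rw [← hR] at h1
    simp at h1
  have hR'm : AEMeasurable R' P := by
    by_contra hc
    rw [Measure.map_of_not_aemeasurable hc] at hR'
    have h1 := (isProbabilityMeasure_gammaMeasure ha hb).measure_univ
    rw [← hR'] at h1
    simp at h1
  have hIR : ∫ ω, Real.log (R ω) ∂P = ∫ x, Real.log x ∂gammaMeasure α β := by
    rw [← hR, integral_map hRm Real.measurable_log.aestronglyMeasurable]
  have hIR' : ∫ ω, Real.log (R' ω) ∂P = ∫ x, Real.log x ∂gammaMeasure a b := by
    rw [← hR', integral_map hR'm Real.measurable_log.aestronglyMeasurable]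
  have hlogμ : Integrable Real.log (gammaMeasure α β) := by
    rw [← hR]
    exact (integrable_map_measure Real.measurable_log.aestronglyMeasurable hRm).mpr hlogR
  have hlogν : Integrable Real.log (gammaMeasure a b) := by
    rw [← hR']
    exact (integrable_map_measure Real.measurable_log.aestronglyMeasurable hR'm).mpr hlogR'
  have hab : α * b = a * β := (div_eq_div_iff hβ.ne' hb.ne').mp hmean
  rw [hIR, hIR']
  constructor
  · intro hI
    by_contra hbβ
    push_neg at hbβ
    rcases eq_or_lt_of_le hbβ with hEq | hLt
    · have hαa : α = a := by
        apply mul_right_cancel₀ hb.ne'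
        rw [hab, hEq]
      rw [hαa, hEq] at hI
      exact lt_irrefl _ hI
    · have hlt : α < a := by nlinarith
      have := lt_of_shape_lt ha hb hα hβ hmean.symm hlt hlogν hlogμ
      exact absurd hI (not_lt.mpr this.le)
  · intro hbβ
    have hlt : a < α := by nlinarith
    exact lt_of_shape_lt hα hβ ha hb hmean hlt hlogμ hlogν
end

section
/- For any α ∈ (1,2) and β > 0, and any C > 0, there exist μ ∈ ℝ and σ > 0 such that for R ~ InverseGamma(α, β) and R' ~ LogNormal(μ, σ²): E[R] = E[R'], Var(R) = ∞, Var(R') < ∞, and E[log R] − E[log R'] > C. -/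
open MeasureTheory ProbabilityTheory
open scoped NNReal ENNReal

/-- The inverse gamma distribution with shape `α` and scale `β`. -/
noncomputable def invGammaMeasure (α β : ℝ) : Measure ℝ :=
  Measure.map (fun x => x⁻¹) (gammaMeasure α β)

/-- The log-normal distribution `LogNormal(μ, σ²)`. -/
noncomputable def logNormalMeasure (μ : ℝ) (v : ℝ≥0) : Measure ℝ :=
  Measure.map Real.exp (gaussianReal μ v)

lemma G1 (μ : ℝ) (v : ℝ≥0) (hv : v ≠ 0) (t x : ℝ) :
    Real.exp (t*x) * gaussianPDFReal μ v x
      = Real.exp (t*μ + t^2*v/2) * gaussianPDFReal (μ + t*v) v x := by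
  have hv' : (v:ℝ) ≠ 0 := by exact_mod_cast hv
  simp only [gaussianPDFReal]
  rw [show ∀ a b c : ℝ, Real.exp a * (b * Real.exp c) = b * Real.exp (a + c) by
    intro a b c; rw [Real.exp_add]; ring,
    show ∀ a b c : ℝ, Real.exp a * (b * Real.exp c) = b * Real.exp (a + c) by
    intro a b c; rw [Real.exp_add]; ring]
  congr 1
  field_simp
  ring

lemma gauss_withDensity (μ : ℝ) (v : ℝ≥0) (hv : v ≠ 0) (g : ℝ → ℝ) :
    ∫ x, g x ∂(gaussianReal μ v) = ∫ x, gaussianPDFReal μ v x * g x := by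
  rw [gaussianReal_of_var_ne_zero μ hv]
  have : gaussianPDF μ v = fun x => (((gaussianPDFReal μ v x).toNNReal : ℝ≥0) : ℝ≥0∞) := rfl
  rw [this, integral_withDensity_eq_integral_smul
    ((measurable_gaussianPDFReal μ v).real_toNNReal) g]
  refine integral_congr_ae (Filter.Eventually.of_forall fun x => ?_)
  simp [NNReal.smul_def, Real.coe_toNNReal _ (gaussianPDFReal_nonneg μ v x)]

lemma G2 (μ : ℝ) (v : ℝ≥0) (hv : v ≠ 0) (t : ℝ) :
    ∫ x, Real.exp (t*x) ∂(gaussianReal μ v) = Real.exp (t*μ + t^2*v/2) := by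
  rw [gauss_withDensity μ v hv]
  simp_rw [mul_comm (gaussianPDFReal μ v _), G1 μ v hv t]
  rw [integral_const_mul, integral_gaussianPDFReal_eq_one _ hv, mul_one]

lemma G3 (μ : ℝ) (v : ℝ≥0) (hv : v ≠ 0) (t : ℝ) :
    Integrable (fun x => Real.exp (t*x)) (gaussianReal μ v) := by
  rw [gaussianReal_of_var_ne_zero μ hv]
  have h : gaussianPDF μ v = fun x => (((gaussianPDFReal μ v x).toNNReal : ℝ≥0) : ℝ≥0∞) := rfl
  rw [h, integrable_withDensity_iff_integrable_smul
    ((measurable_gaussianPDFReal μ v).real_toNNReal)]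
  have : (fun x => ((gaussianPDFReal μ v x).toNNReal : ℝ≥0) • Real.exp (t*x))
      = fun x => Real.exp (t*μ + t^2*v/2) * gaussianPDFReal (μ + t*v) v x := by
    funext x
    rw [NNReal.smul_def, smul_eq_mul, Real.coe_toNNReal _ (gaussianPDFReal_nonneg μ v x),
      mul_comm, G1 μ v hv]
  rw [this]
  exact (integrable_gaussianPDFReal _ _).const_mul _

lemma G4 (μ : ℝ) (v : ℝ≥0) (hv : v ≠ 0) :
    Integrable (fun x => x) (gaussianReal μ v) := by
  refine Integrable.mono' ((G3 μ v hv 1).add (G3 μ v hv (-1)))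
    measurable_id.aestronglyMeasurable (Filter.Eventually.of_forall fun x => ?_)
  simp only [Real.norm_eq_abs, one_mul, neg_one_mul, Pi.add_apply]
  rcases le_or_gt 0 x with h | h
  · rw [abs_of_nonneg h]
    nlinarith [Real.add_one_le_exp x, Real.exp_pos (-x)]
  · rw [abs_of_neg h]
    nlinarith [Real.add_one_le_exp (-x), Real.exp_pos x]

lemma G5 (μ : ℝ) (v : ℝ≥0) (hv : v ≠ 0) :
    ∫ x, x ∂(gaussianReal μ v) = μ := by
  have h0 : ∫ x, x ∂(gaussianReal 0 v) = 0 := by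
    have hmap : Measure.map (fun x => -x) (gaussianReal 0 v) = gaussianReal 0 v := by
      have := gaussianReal_map_const_mul (μ := 0) (v := v) (-1)
      simpa using this
    have : ∫ x, x ∂(gaussianReal 0 v) = ∫ x, -x ∂(gaussianReal 0 v) := by
      conv_lhs => rw [← hmap]
      rw [integral_map (φ := fun x : ℝ => -x) (f := fun x : ℝ => x)
        measurable_neg.aemeasurable measurable_id.aestronglyMeasurable]
    have h2 : ∫ x, -x ∂(gaussianReal 0 v) = -∫ x, x ∂(gaussianReal 0 v) := integral_neg _
    linarith [this, h2]
  have hmap : Measure.map (fun x => x + μ) (gaussianReal 0 v) = gaussianReal μ v := by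
    simpa using gaussianReal_map_add_const (μ := 0) (v := v) μ
  rw [← hmap, integral_map (φ := fun x : ℝ => x + μ) (f := fun x : ℝ => x)
    (measurable_id'.add_const μ).aemeasurable measurable_id.aestronglyMeasurable]
  rw [integral_add (G4 0 v hv) (integrable_const μ), h0, integral_const]
  simp

lemma Ga0 {α β : ℝ} (hα : 1 < α) (hα2 : α < 2) (hβ : 0 < β) (x : ℝ) :
    gammaPDFReal α β x * x⁻¹ = (β/(α-1)) * gammaPDFReal (α-1) β x := by
  have hΓ : Real.Gamma α = (α - 1) * Real.Gamma (α - 1) := by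
    have := Real.Gamma_add_one (s := α - 1) (by intro hh; linarith [hh])
    rw [sub_add_cancel] at this
    exact this
  have hα1 : (0:ℝ) < α - 1 := by linarith
  simp only [gammaPDFReal]
  rcases lt_trichotomy x 0 with h | h | h
  · rw [if_neg (by linarith), if_neg (by linarith)]; ring
  · subst h
    rw [if_pos le_rfl, if_pos le_rfl]
    rw [Real.zero_rpow (by linarith : α - 1 ≠ 0), Real.zero_rpow (by intro hh; linarith [hh] : α - 1 - 1 ≠ 0)]
    simp
  · rw [if_pos h.le, if_pos h.le]
    have hx : x ≠ 0 := h.ne'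
    have hrp : x ^ (α - 1 - 1) = x ^ (α - 1) * x⁻¹ := by
      rw [Real.rpow_sub h, Real.rpow_one, div_eq_mul_inv]
    rw [hrp]
    have hra : β ^ α = β ^ (α - 1) * β := by
      rw [← Real.rpow_add_one hβ.ne' (α - 1), sub_add_cancel]
    rw [hra, hΓ]
    have hΓ1 : Real.Gamma (α - 1) ≠ 0 := ne_of_gt (Real.Gamma_pos_of_pos hα1)
    field_simp

lemma Ga1 {a r : ℝ} (ha : 0 < a) (hr : 0 < r) :
    ∫ x, gammaPDFReal a r x = 1 := by
  have h := lintegral_gammaPDF_eq_one ha hr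
  rw [integral_eq_lintegral_of_nonneg_ae
    (Filter.Eventually.of_forall (gammaPDFReal_nonneg ha hr))
    (measurable_gammaPDFReal a r).aestronglyMeasurable]
  rw [show (fun x => ENNReal.ofReal (gammaPDFReal a r x)) = gammaPDF a r from
    funext fun x => (gammaPDF_eq a r x).symm, h, ENNReal.toReal_one]

lemma gamma_withDensity {a r : ℝ} (ha : 0 < a) (hr : 0 < r) (g : ℝ → ℝ) :
    ∫ x, g x ∂(gammaMeasure a r) = ∫ x, gammaPDFReal a r x * g x := by
  have : gammaMeasure a r = (volume : Measure ℝ).withDensity fun x => (((gammaPDFReal a r x).toNNReal : ℝ≥0) : ℝ≥0∞) := rfl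
  rw [this, integral_withDensity_eq_integral_smul
    ((measurable_gammaPDFReal a r).real_toNNReal) g]
  refine integral_congr_ae (Filter.Eventually.of_forall fun x => ?_)
  simp [NNReal.smul_def, Real.coe_toNNReal _ (gammaPDFReal_nonneg ha hr x)]

lemma Ga2 {α β : ℝ} (hα : 1 < α) (hα2 : α < 2) (hβ : 0 < β) :
    ∫ x, x⁻¹ ∂(gammaMeasure α β) = β / (α - 1) := by
  rw [gamma_withDensity (by linarith : (0:ℝ) < α) hβ]
  simp_rw [Ga0 hα hα2 hβ]
  rw [integral_const_mul, Ga1 (by linarith : (0:ℝ) < α - 1) hβ, mul_one]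

lemma rpow_lint_top {s ε : ℝ} (hs : s ≤ -1) (hε : 0 < ε) :
    ∫⁻ x in Set.Ioc 0 ε, ENNReal.ofReal (x ^ s) = ∞ := by
  by_contra h
  have hfin : IntegrableOn (fun x => x ^ s) (Set.Ioc 0 ε) volume := by
    refine ⟨(measurable_id.pow_const s).aestronglyMeasurable, ?_⟩
    rw [hasFiniteIntegral_def]
    have heq : ∫⁻ x in Set.Ioc 0 ε, (‖x ^ s‖₊ : ℝ≥0∞)
        = ∫⁻ x in Set.Ioc 0 ε, ENNReal.ofReal (x ^ s) := by
      refine setLIntegral_congr_fun measurableSet_Ioc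
        (fun x hx => ?_)
      exact Real.enorm_eq_ofReal (Real.rpow_nonneg hx.1.le s)
    rw [show (∫⁻ a in Set.Ioc 0 ε, ‖a ^ s‖ₑ) = _ from heq]
    exact lt_top_iff_ne_top.2 h
  have hIoo : IntegrableOn (fun x => x ^ s) (Set.Ioo 0 ε) volume :=
    hfin.mono_set Set.Ioo_subset_Ioc_self
  rw [intervalIntegral.integrableOn_Ioo_rpow_iff hε] at hIoo
  linarith

lemma V1 {α β : ℝ} (hα : 1 < α) (hα2 : α < 2) (hβ : 0 < β) (m : ℝ) :
    ∫⁻ x, ENNReal.ofReal ((x - m)^2) ∂(invGammaMeasure α β) = ∞ := by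
  have hmeas : Measurable fun x : ℝ => ENNReal.ofReal ((x - m)^2) :=
    ((measurable_id.sub_const m).pow_const 2).ennreal_ofReal
  rw [invGammaMeasure, lintegral_map hmeas measurable_inv]
  have hgm : gammaMeasure α β = (volume : Measure ℝ).withDensity (gammaPDF α β) := rfl
  have hmeas2 : Measurable fun x : ℝ => ENNReal.ofReal ((x⁻¹ - m)^2) :=
    ((measurable_inv.sub_const m).pow_const 2).ennreal_ofReal
  have hgpm : Measurable (gammaPDF α β) := (measurable_gammaPDFReal α β).ennreal_ofReal
  rw [hgm, lintegral_withDensity_eq_lintegral_mul _ hgpm hmeas2]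
  set ε : ℝ := min 1 (1/(2*(|m|+1))) with hε
  have hεpos : 0 < ε := lt_min one_pos (by positivity)
  set c : ℝ := β ^ α / Real.Gamma α with hc
  have hcpos : 0 < c := div_pos (Real.rpow_pos_of_pos hβ α) (Real.Gamma_pos_of_pos (by linarith))
  set k : ℝ := c * Real.exp (-β) / 4 with hk
  have hkpos : 0 < k := by positivity
  rw [eq_top_iff]
  calc (⊤ : ℝ≥0∞) = ∫⁻ x in Set.Ioc 0 ε, ENNReal.ofReal (k * x ^ (α - 3)) := by
        simp_rw [ENNReal.ofReal_mul hkpos.le]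
        rw [lintegral_const_mul (r := ENNReal.ofReal k)
          (f := fun x => ENNReal.ofReal (x ^ (α - 3)))
          (Measurable.ennreal_ofReal (by fun_prop))]
        rw [rpow_lint_top (by linarith) hεpos,
          ENNReal.mul_top (by simp [ENNReal.ofReal_eq_zero, not_le, hkpos])]
    _ ≤ ∫⁻ x in Set.Ioc 0 ε, (gammaPDF α β * fun x => ENNReal.ofReal ((x⁻¹ - m)^2)) x := by
        refine setLIntegral_mono (hgpm.mul hmeas2) fun x hx => ?_
        obtain ⟨hx1, hx2⟩ := hx
        have hxle1 : x ≤ 1 := hx2.trans (min_le_left _ _)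
        have hxle2 : x ≤ 1/(2*(|m|+1)) := hx2.trans (min_le_right _ _)
        have h2m : (0:ℝ) < 2*(|m|+1) := by positivity
        have hx2m : x * (2*(|m|+1)) ≤ 1 := by
          rw [← le_div_iff₀ h2m]; simpa [one_div] using hxle2
        have hinvx : 2*(|m|+1) ≤ x⁻¹ := by
          rw [← one_div, le_div_iff₀ hx1]; linarith
        have habs : |m| ≤ x⁻¹/2 := by nlinarith [abs_nonneg m]
        have hsq : (x⁻¹/2)^2 ≤ (x⁻¹ - m)^2 := by
          refine pow_le_pow_left₀ (by positivity) ?_ 2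
          have := neg_abs_le m
          linarith [le_abs_self m]
        have hexp : Real.exp (-β) ≤ Real.exp (-(β * x)) :=
          Real.exp_le_exp.2 (by nlinarith)
        have hxpow : x ^ (α - 3) = x ^ (α - 1) * (x⁻¹)^2 := by
          rw [show α - 3 = (α - 1) - (2:ℕ) by push_cast; ring, Real.rpow_sub hx1,
            Real.rpow_natCast, inv_pow]
          ring
        simp only [Pi.mul_apply, gammaPDF_of_nonneg hx1.le]
        rw [← ENNReal.ofReal_mul (by positivity)]
        refine ENNReal.ofReal_le_ofReal ?_
        have hApos : (0:ℝ) ≤ x ^ (α - 1) := Real.rpow_nonneg hx1.le _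
        have key : Real.exp (-β) * (x⁻¹/2)^2 ≤ Real.exp (-(β*x)) * (x⁻¹ - m)^2 :=
          mul_le_mul hexp hsq (by positivity) (Real.exp_pos _).le
        calc k * x ^ (α - 3) = (c * x ^ (α-1)) * (Real.exp (-β) * (x⁻¹/2)^2) := by
              rw [hxpow]; ring
          _ ≤ (c * x ^ (α-1)) * (Real.exp (-(β*x)) * (x⁻¹ - m)^2) :=
              mul_le_mul_of_nonneg_left key (by positivity)
          _ = c * x ^ (α-1) * Real.exp (-(β*x)) * (x⁻¹ - m)^2 := by ring
    _ ≤ ∫⁻ x, (gammaPDF α β * fun x => ENNReal.ofReal ((x⁻¹ - m)^2)) x :=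
        setLIntegral_le_lintegral _ _

lemma aemeasurable_of_map_prob {Ω : Type} [MeasurableSpace Ω] {P : Measure Ω}
    {R : Ω → ℝ} {ν : Measure ℝ} [IsProbabilityMeasure ν]
    (hR : Measure.map R P = ν) : AEMeasurable R P := by
  by_contra h
  rw [Measure.map_of_not_aemeasurable h] at hR
  have h1 : ν Set.univ = 1 := measure_univ
  rw [← hR] at h1
  simp at h1

/-- infinitely worse variance can coexist with an arbitrarily
better bound: for any inverse-gamma `R` with `α ∈ (1,2)` there is a log-normal
`R'` with the same mean, finite variance (while `Var R = ∞`), and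
`E[log R] − E[log R'] > C`. -/
theorem invGamma_vs_logNormal (α β C : ℝ) (hα : 1 < α) (hα2 : α < 2)
    (hβ : 0 < β) (hC : 0 < C) :
    ∃ (μ : ℝ) (σ : ℝ≥0), 0 < σ ∧
      ∀ {Ω : Type} [MeasurableSpace Ω] (P : Measure Ω),
        IsProbabilityMeasure P →
        ∀ (R R' : Ω → ℝ),
          Measure.map R P = invGammaMeasure α β →
          Measure.map R' P = logNormalMeasure μ (σ ^ 2) →
          (∫ ω, R ω ∂P) = (∫ ω, R' ω ∂P)
            ∧ evariance R P = ∞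
            ∧ evariance R' P < ∞
            ∧ C < (∫ ω, Real.log (R ω) ∂P) - ∫ ω, Real.log (R' ω) ∂P := by
  have hα0 : (0:ℝ) < α := by linarith
  have hα1 : (0:ℝ) < α - 1 := by linarith
  haveI : IsProbabilityMeasure (gammaMeasure α β) := isProbabilityMeasure_gammaMeasure hα0 hβ
  haveI hinvprob : IsProbabilityMeasure (invGammaMeasure α β) := by
    rw [invGammaMeasure]; exact Measure.isProbabilityMeasure_map measurable_inv.aemeasurable
  set d : ℝ := β / (α - 1) with hdd
  have hd : 0 < d := div_pos hβ hα1
  set L : ℝ := ∫ x, Real.log x ∂(invGammaMeasure α β) with hL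
  set μ0 : ℝ := min (L - C - 1) (Real.log d - 1) with hμ0
  set t : ℝ := Real.log d - μ0 with ht
  have htpos : (0:ℝ) < t := by
    have : μ0 ≤ Real.log d - 1 := min_le_right _ _
    simp only [ht]; linarith
  set σ : ℝ≥0 := (Real.sqrt (2*t)).toNNReal with hσ
  have hσpos : 0 < σ := by
    rw [hσ]
    exact Real.toNNReal_pos.2 (Real.sqrt_pos.2 (by linarith))
  have hv : ((σ^2 : ℝ≥0) : ℝ) = 2 * t := by
    push_cast
    rw [hσ, Real.coe_toNNReal _ (Real.sqrt_nonneg _), Real.sq_sqrt (by linarith)]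
  have hvne : (σ^2 : ℝ≥0) ≠ 0 := pow_ne_zero 2 hσpos.ne'
  haveI : IsProbabilityMeasure (logNormalMeasure μ0 (σ^2)) := by
    rw [logNormalMeasure]; exact Measure.isProbabilityMeasure_map Real.measurable_exp.aemeasurable
  refine ⟨μ0, σ, hσpos, ?_⟩
  intro Ω _ P hP R R' hR hR'
  haveI := hP
  have hRae : AEMeasurable R P := aemeasurable_of_map_prob hR
  have hR'ae : AEMeasurable R' P := aemeasurable_of_map_prob hR'
  have hmeanR : (∫ ω, R ω ∂P) = d := by
    rw [show (∫ ω, R ω ∂P) = ∫ ω, (fun x : ℝ => x) (R ω) ∂P from rfl,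
      ← integral_map hRae measurable_id'.aestronglyMeasurable, hR, invGammaMeasure,
      integral_map measurable_inv.aemeasurable measurable_id'.aestronglyMeasurable]
    exact Ga2 hα hα2 hβ
  have hmeanR' : (∫ ω, R' ω ∂P) = d := by
    rw [show (∫ ω, R' ω ∂P) = ∫ ω, (fun x : ℝ => x) (R' ω) ∂P from rfl,
      ← integral_map hR'ae measurable_id'.aestronglyMeasurable, hR', logNormalMeasure,
      integral_map Real.measurable_exp.aemeasurable measurable_id'.aestronglyMeasurable]
    have := G2 μ0 (σ^2) hvne 1
    simp only [one_mul, one_pow] at this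
    rw [show (fun x : ℝ => (fun x : ℝ => x) (Real.exp x)) = fun x => Real.exp x from rfl,
      this, hv]
    rw [show μ0 + 2 * t / 2 = Real.log d by rw [ht]; ring, Real.exp_log hd]
  have hlogR : (∫ ω, Real.log (R ω) ∂P) = L := by
    rw [hL, ← hR, integral_map hRae Real.measurable_log.aestronglyMeasurable]
  have hlogR' : (∫ ω, Real.log (R' ω) ∂P) = μ0 := by
    rw [← integral_map hR'ae Real.measurable_log.aestronglyMeasurable, hR', logNormalMeasure,
      integral_map Real.measurable_exp.aemeasurable Real.measurable_log.aestronglyMeasurable]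
    simp only [Real.log_exp]
    exact G5 μ0 (σ^2) hvne
  refine ⟨by rw [hmeanR, hmeanR'], ?_, ?_, ?_⟩
  · rw [evariance_eq_lintegral_ofReal]
    have hm : Measurable fun x : ℝ => ENNReal.ofReal ((x - (∫ ω, R ω ∂P))^2) :=
      ((measurable_id.sub_const _).pow_const 2).ennreal_ofReal
    have := V1 hα hα2 hβ (∫ ω, R ω ∂P)
    rw [← hR, lintegral_map' hm.aemeasurable hRae] at this
    exact this
  · refine (MemLp.evariance_lt_top ?_)
    rw [memLp_two_iff_integrable_sq hR'ae.aestronglyMeasurable]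
    have h1 : Integrable (fun x : ℝ => x^2) (Measure.map R' P) ↔
        Integrable (fun ω => (R' ω)^2) P := by
      rw [integrable_map_measure (measurable_id'.pow_const 2).aestronglyMeasurable hR'ae]
      rfl
    rw [← h1, hR', logNormalMeasure,
      integrable_map_measure (measurable_id'.pow_const 2).aestronglyMeasurable
        Real.measurable_exp.aemeasurable]
    have : ((fun x : ℝ => x^2) ∘ Real.exp) = fun x => Real.exp (2*x) := by
      funext x
      simp [← Real.exp_add, sq, two_mul]
    rw [this]
    exact G3 μ0 (σ^2) hvne 2
  · rw [hlogR, hlogR']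
    have : μ0 ≤ L - C - 1 := min_le_left _ _
    linarith
end

section
/- If φ : ℝ → ℝ is convex and α ∈ ℝ^K has nonnegative coordinates, then the function w ↦ φ(αᵀw) from ℝ^K to ℝ is supermodular. -/
open MeasureTheory

/-- A function `φ : (Fin K → ℝ) → ℝ` is supermodular if
`φ(x ⊓ y) + φ(x ⊔ y) ≥ φ(x) + φ(y)` for the coordinatewise lattice order. -/
def Supermodular {K : ℕ} (φ : (Fin K → ℝ) → ℝ) : Prop :=
  ∀ x y : Fin K → ℝ, φ x + φ y ≤ φ (x ⊓ y) + φ (x ⊔ y)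

lemma convex_four_point (φ : ℝ → ℝ) (hφ : ConvexOn ℝ Set.univ φ)
    (a b c d : ℝ) (hab : a ≤ b) (hbd : b ≤ d) (hsum : a + d = b + c) :
    φ b + φ c ≤ φ a + φ d := by
  rcases eq_or_lt_of_le (hab.trans hbd) with h | h
  · have hba : b = a := le_antisymm (h ▸ hbd) hab
    have hc : c = d := by linarith
    rw [hba, hc]
  · set t : ℝ := (d - b) / (d - a) with ht
    have hda : 0 < d - a := by linarith
    have ht0 : 0 ≤ t := div_nonneg (by linarith) hda.le
    have ht1 : t ≤ 1 := (div_le_one hda).mpr (by linarith)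
    have hb : b = t * a + (1 - t) * d := by
      rw [ht]; field_simp; ring
    have hc : c = (1 - t) * a + t * d := by
      field_simp [ht]; ring_nf; nlinarith [hsum]
    have h1 := hφ.2 (Set.mem_univ a) (Set.mem_univ d) ht0 (by linarith) (by ring : t + (1 - t) = 1)
    have h2 := hφ.2 (Set.mem_univ a) (Set.mem_univ d) (by linarith) ht0 (by ring : (1 - t) + t = 1)
    simp only [smul_eq_mul] at h1 h2
    rw [hb, hc]
    linarith

/-- if `φ : ℝ → ℝ` is convex and `α` has nonnegative coordinates,
then `w ↦ φ(αᵀw)` is supermodular. -/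
theorem convex_comp_inner_supermodular {K : ℕ} (φ : ℝ → ℝ)
    (hφ : ConvexOn ℝ Set.univ φ) (α : Fin K → ℝ) (hα : ∀ i, 0 ≤ α i) :
    Supermodular (fun w => φ (∑ i, α i * w i)) := by
  intro x y
  simp only
  apply convex_four_point φ hφ
  · exact Finset.sum_le_sum fun i _ =>
      mul_le_mul_of_nonneg_left (inf_le_left : (x ⊓ y) i ≤ x i) (hα i)
  · exact Finset.sum_le_sum fun i _ =>
      mul_le_mul_of_nonneg_left (le_sup_left : x i ≤ (x ⊔ y) i) (hα i)
  · rw [← Finset.sum_add_distrib, ← Finset.sum_add_distrib]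
    refine Finset.sum_congr rfl fun i _ => ?_
    have : (x ⊓ y) i + (x ⊔ y) i = x i + y i := by
      simp only [Pi.inf_apply, Pi.sup_apply]
      rcases le_total (x i) (y i) with h | h <;> simp [min_eq_left, max_eq_right, min_eq_right, max_eq_left, h] <;> ring
    rw [← mul_add, ← mul_add, this]
end

section
/- Let w ~ Q₁ and v ~ Q₂ be ℝ^K-valued random vectors with Q₁ ≤_SM Q₂ in the supermodular order, and let α ∈ ℝ^K have nonnegative coordinates. Then αᵀw ≤_cx αᵀv in the convex order. -/
open MeasureTheory

/-- `Q₁` is smaller than `Q₂` in the supermodular order. -/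
def SupermodularOrder {K : ℕ} (Q₁ Q₂ : Measure (Fin K → ℝ)) : Prop :=
  ∀ φ : (Fin K → ℝ) → ℝ, Supermodular φ →
    Integrable φ Q₁ → Integrable φ Q₂ →
    ∫ w, φ w ∂Q₁ ≤ ∫ v, φ v ∂Q₂

/-- Convex function inequality: if `a, b ≥ s` and `a + b = s + t`, then
`ψ a + ψ b ≤ ψ s + ψ t`. -/
lemma convex_pair_ineq {ψ : ℝ → ℝ} (hψ : ConvexOn ℝ Set.univ ψ)
    {s t a b : ℝ} (hsa : s ≤ a) (hsb : s ≤ b) (hab : a + b = s + t) :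
    ψ a + ψ b ≤ ψ s + ψ t := by
  have hat : a ≤ t := by linarith
  rcases eq_or_lt_of_le (le_trans hsa hat : s ≤ t) with h | hst
  · have ha : a = s := le_antisymm (h ▸ hat) hsa
    have hb : b = t := by linarith
    rw [ha, hb]
  · set μ : ℝ := (a - s) / (t - s) with hμdef
    have hts : (0:ℝ) < t - s := by linarith
    have hμ0 : 0 ≤ μ := div_nonneg (by linarith) hts.le
    have hμ1 : μ ≤ 1 := by
      rw [div_le_one hts]; linarith
    have h1 : (1 - μ) • s + μ • t = a := by
      have hμm : μ * (t - s) = a - s := by rw [hμdef]; exact div_mul_cancel₀ _ hts.ne'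
      simp only [smul_eq_mul]; linear_combination hμm
    have h2 : μ • s + (1 - μ) • t = b := by
      have hb : b = s + t - a := by linarith
      have hμm : μ * (t - s) = a - s := by rw [hμdef]; exact div_mul_cancel₀ _ hts.ne'
      rw [hb]; simp only [smul_eq_mul]; linear_combination (-1 : ℝ) * hμm
    have hA := hψ.2 (Set.mem_univ s) (Set.mem_univ t) (by linarith : (0:ℝ) ≤ 1 - μ) hμ0
      (by ring)
    have hB := hψ.2 (Set.mem_univ s) (Set.mem_univ t) hμ0 (by linarith : (0:ℝ) ≤ 1 - μ)
      (by ring)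
    rw [h1] at hA
    rw [h2] at hB
    simp only [smul_eq_mul] at hA hB
    nlinarith [hA, hB]

/-- supermodular order of the laws implies convex order of the
weighted sums `αᵀw` (for nonnegative coefficients `α`). -/
theorem supermodular_order_implies_convex_order {K : ℕ}
    (Q₁ Q₂ : Measure (Fin K → ℝ)) [IsProbabilityMeasure Q₁]
    [IsProbabilityMeasure Q₂] (hSM : SupermodularOrder Q₁ Q₂)
    (α : Fin K → ℝ) (hα : ∀ i, 0 ≤ α i) :
    ∀ ψ : ℝ → ℝ, ConvexOn ℝ Set.univ ψ →
      Integrable (fun w => ψ (∑ i, α i * w i)) Q₁ →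
      Integrable (fun v => ψ (∑ i, α i * v i)) Q₂ →
      ∫ w, ψ (∑ i, α i * w i) ∂Q₁ ≤ ∫ v, ψ (∑ i, α i * v i) ∂Q₂ := by
  intro ψ hψ h1 h2
  refine hSM (fun w => ψ (∑ i, α i * w i)) ?_ h1 h2
  intro x y
  apply convex_pair_ineq hψ
  · exact Finset.sum_le_sum fun i _ =>
      mul_le_mul_of_nonneg_left (inf_le_left : x i ⊓ y i ≤ x i) (hα i)
  · exact Finset.sum_le_sum fun i _ =>
      mul_le_mul_of_nonneg_left (inf_le_right : x i ⊓ y i ≤ y i) (hα i)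
  · rw [← Finset.sum_add_distrib, ← Finset.sum_add_distrib]
    congr 1
    ext i
    simp only [Pi.inf_apply, Pi.sup_apply]
    rw [← mul_add, ← mul_add, min_add_max]
end

section
/- Negative dependence tightens the bound: if Q₁ ≤_SM Q₂ in the supermodular order on positive random vectors in ℝ^K and α is in the K-simplex, then E_{Q₁}[log(αᵀw)] ≥ E_{Q₂}[log(αᵀv)], assuming the expectations exist. -/
open MeasureTheory

namespace NDT

open Filter

variable {K : ℕ}

lemma msum_inf_add_sup (α : Fin K → ℝ) (x y : Fin K → ℝ) :
    (∑ i, α i * max ((x ⊓ y) i) 0) + (∑ i, α i * max ((x ⊔ y) i) 0)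
      = (∑ i, α i * max (x i) 0) + (∑ i, α i * max (y i) 0) := by
  rw [← Finset.sum_add_distrib, ← Finset.sum_add_distrib]
  refine Finset.sum_congr rfl fun i _ => ?_
  have hinf : (x ⊓ y) i = x i ⊓ y i := rfl
  have hsup : (x ⊔ y) i = x i ⊔ y i := rfl
  rcases le_total (x i) (y i) with h | h
  · rw [hinf, hsup, inf_eq_left.mpr h, sup_eq_right.mpr h]
  · rw [hinf, hsup, inf_eq_right.mpr h, sup_eq_left.mpr h]; ring

lemma msum_inf_le_left (α : Fin K → ℝ) (hα : ∀ i, 0 ≤ α i) (x y : Fin K → ℝ) :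
    (∑ i, α i * max ((x ⊓ y) i) 0) ≤ ∑ i, α i * max (x i) 0 := by
  refine Finset.sum_le_sum fun i _ => ?_
  exact mul_le_mul_of_nonneg_left (max_le_max inf_le_left le_rfl) (hα i)

lemma msum_inf_le_right (α : Fin K → ℝ) (hα : ∀ i, 0 ≤ α i) (x y : Fin K → ℝ) :
    (∑ i, α i * max ((x ⊓ y) i) 0) ≤ ∑ i, α i * max (y i) 0 := by
  refine Finset.sum_le_sum fun i _ => ?_
  exact mul_le_mul_of_nonneg_left (max_le_max inf_le_right le_rfl) (hα i)

lemma msum_nonneg (α : Fin K → ℝ) (hα : ∀ i, 0 ≤ α i) (x : Fin K → ℝ) :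
    0 ≤ ∑ i, α i * max (x i) 0 :=
  Finset.sum_nonneg fun i _ => mul_nonneg (hα i) (le_max_right _ _)

lemma sm_neg_log (α : Fin K → ℝ) (hα : ∀ i, 0 ≤ α i) (c : ℝ) (hc : 0 < c) :
    Supermodular (fun x : Fin K → ℝ => -Real.log (c + ∑ i, α i * max (x i) 0)) := by
  intro x y
  set ma := ∑ i, α i * max ((x ⊓ y) i) 0 with hma
  set mb := ∑ i, α i * max ((x ⊔ y) i) 0 with hmb
  set ms := ∑ i, α i * max (x i) 0 with hms
  set mt := ∑ i, α i * max (y i) 0 with hmt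
  have hsum : ma + mb = ms + mt := msum_inf_add_sup α x y
  have h1 : ma ≤ ms := msum_inf_le_left α hα x y
  have h2 : ma ≤ mt := msum_inf_le_right α hα x y
  have ha : 0 < c + ma := by have := msum_nonneg α hα (x ⊓ y); linarith
  have hb : 0 < c + mb := by have := msum_nonneg α hα (x ⊔ y); linarith
  have hs : 0 < c + ms := by have := msum_nonneg α hα x; linarith
  have ht : 0 < c + mt := by have := msum_nonneg α hα y; linarith
  have key : Real.log (c + ma) + Real.log (c + mb)
      ≤ Real.log (c + ms) + Real.log (c + mt) := by
    rw [← Real.log_mul ha.ne' hb.ne', ← Real.log_mul hs.ne' ht.ne']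
    exact Real.log_le_log (by positivity) (by nlinarith)
  have goal : -Real.log (c + ms) + -Real.log (c + mt)
      ≤ -Real.log (c + ma) + -Real.log (c + mb) := by linarith
  exact goal

lemma abs_log_add_le {u e : ℝ} (hu : 0 < u) (he : 0 < e) (he1 : e ≤ 1) :
    |Real.log (e + u)| ≤ |Real.log u| + Real.log 2 := by
  have hmax : (0:ℝ) < max u 1 := lt_max_of_lt_right one_pos
  have hub : e + u ≤ 2 * max u 1 := by
    have h1 : e ≤ max u 1 := le_trans he1 (le_max_right _ _)
    have h2' : u ≤ max u 1 := le_max_left _ _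
    linarith
  have hlogmax : Real.log (max u 1) ≤ |Real.log u| := by
    rcases le_total u 1 with h | h
    · rw [max_eq_right h]; simp [abs_nonneg]
    · rw [max_eq_left h]; exact le_abs_self _
  rw [abs_le]
  constructor
  · have h1 : Real.log u ≤ Real.log (e + u) := Real.log_le_log hu (by linarith)
    have h2' : -|Real.log u| ≤ Real.log u := neg_abs_le _
    have h3 : (0:ℝ) ≤ Real.log 2 := Real.log_nonneg (by norm_num)
    linarith
  · have h1 : Real.log (e + u) ≤ Real.log (2 * max u 1) :=
      Real.log_le_log (by linarith) hub
    rw [Real.log_mul (by norm_num) hmax.ne'] at h1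
    linarith

lemma helper (Q : Measure (Fin K → ℝ)) [IsProbabilityMeasure Q]
    (hpos : ∀ᵐ x ∂Q, ∀ i, 0 < x i)
    (α : Fin K → ℝ) (hα : ∀ i, 0 ≤ α i) (hj : ∃ j, 0 < α j)
    (hint : Integrable (fun w => Real.log (∑ i, α i * w i)) Q) :
    (∀ n : ℕ, Integrable (fun x => Real.log (1/((n:ℝ)+1) + ∑ i, α i * max (x i) 0)) Q) ∧
    Tendsto (fun n : ℕ => ∫ x, Real.log (1/((n:ℝ)+1) + ∑ i, α i * max (x i) 0) ∂Q)
      atTop (nhds (∫ x, Real.log (∑ i, α i * x i) ∂Q)) := by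
  have hε : ∀ n : ℕ, 0 < 1/((n:ℝ)+1) := fun n => by positivity
  have hε1 : ∀ n : ℕ, 1/((n:ℝ)+1) ≤ 1 := fun n => by
    rw [div_le_one (by positivity)]; linarith [Nat.cast_nonneg (α := ℝ) n]
  have hspos : ∀ᵐ x ∂Q, 0 < ∑ i, α i * x i := by
    refine hpos.mono fun x hx => ?_
    obtain ⟨j, hj⟩ := hj
    exact Finset.sum_pos' (fun i _ => mul_nonneg (hα i) (hx i).le)
      ⟨j, Finset.mem_univ j, mul_pos hj (hx j)⟩
  have heq : ∀ᵐ x ∂Q, (∑ i, α i * max (x i) 0) = ∑ i, α i * x i := by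
    refine hpos.mono fun x hx => ?_
    exact Finset.sum_congr rfl fun i _ => by rw [max_eq_left (hx i).le]
  have hmeas : ∀ n : ℕ, AEStronglyMeasurable
      (fun x : Fin K → ℝ => Real.log (1/((n:ℝ)+1) + ∑ i, α i * max (x i) 0)) Q := by
    intro n
    refine (Real.measurable_log.comp ?_).aestronglyMeasurable
    exact measurable_const.add (Finset.measurable_sum _ fun i _ =>
      (measurable_const.mul ((measurable_pi_apply i).max measurable_const)))
  have hbound_int : Integrable (fun x => |Real.log (∑ i, α i * x i)| + Real.log 2) Q :=
    hint.abs.add (integrable_const _)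
  have hbound : ∀ n : ℕ, ∀ᵐ x ∂Q,
      ‖Real.log (1/((n:ℝ)+1) + ∑ i, α i * max (x i) 0)‖
        ≤ |Real.log (∑ i, α i * x i)| + Real.log 2 := by
    intro n
    filter_upwards [hspos, heq] with x hx hxeq
    rw [Real.norm_eq_abs, hxeq]
    exact abs_log_add_le hx (hε n) (hε1 n)
  have hInt : ∀ n : ℕ, Integrable
      (fun x => Real.log (1/((n:ℝ)+1) + ∑ i, α i * max (x i) 0)) Q := by
    intro n
    exact Integrable.mono' hbound_int (hmeas n) (hbound n)
  refine ⟨hInt, ?_⟩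
  refine tendsto_integral_of_dominated_convergence _ hmeas hbound_int hbound ?_
  filter_upwards [hspos, heq] with x hx hxeq
  have h0 : Tendsto (fun n : ℕ => 1/((n:ℝ)+1) + ∑ i, α i * x i) atTop
      (nhds (∑ i, α i * x i)) := by
    have := tendsto_one_div_add_atTop_nhds_zero_nat.add_const (∑ i, α i * x i)
    rwa [zero_add] at this
  have := ((Real.continuousAt_log hx.ne').tendsto).comp h0
  simpa [Function.comp_def, hxeq] using this

end NDT

/-- negative dependence tightens the bound: if `Q₁ ≤_SM Q₂`
(laws of positive random vectors) and `α` is in the simplex, then the MCO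
under `Q₁` is at least the MCO under `Q₂`. -/
theorem negative_dependence_tightens {K : ℕ}
    (Q₁ Q₂ : Measure (Fin K → ℝ)) [IsProbabilityMeasure Q₁]
    [IsProbabilityMeasure Q₂]
    (hpos₁ : ∀ᵐ w ∂Q₁, ∀ i, 0 < w i) (hpos₂ : ∀ᵐ v ∂Q₂, ∀ i, 0 < v i)
    (hSM : SupermodularOrder Q₁ Q₂)
    (α : Fin K → ℝ) (hα : ∀ i, 0 ≤ α i) (hαsum : ∑ i, α i = 1)
    (hint₁ : Integrable (fun w => Real.log (∑ i, α i * w i)) Q₁)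
    (hint₂ : Integrable (fun v => Real.log (∑ i, α i * v i)) Q₂) :
    ∫ v, Real.log (∑ i, α i * v i) ∂Q₂
      ≤ ∫ w, Real.log (∑ i, α i * w i) ∂Q₁ := by
  have hj : ∃ j, 0 < α j := by
    by_contra h
    push_neg at h
    have hz : ∑ i, α i = 0 := Finset.sum_eq_zero fun i _ => le_antisymm (h i) (hα i)
    rw [hαsum] at hz
    exact one_ne_zero hz
  obtain ⟨h₁int, h₁tend⟩ := NDT.helper Q₁ hpos₁ α hα hj hint₁
  obtain ⟨h₂int, h₂tend⟩ := NDT.helper Q₂ hpos₂ α hα hj hint₂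
  refine le_of_tendsto_of_tendsto' h₂tend h₁tend fun n => ?_
  have hsm := NDT.sm_neg_log α hα (1/((n:ℝ)+1)) (by positivity)
  have hkey := hSM _ hsm (h₁int n).neg (h₂int n).neg
  rw [integral_neg, integral_neg] at hkey
  linarith
end
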